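/- arXiv:2112.04142 — 4 statements merged into one kernel-verified Lean document; each statement's English description precedes it below -/
import Mathlib

section
/- For all integers m, n ≥ 1, χ_la(P_{2m} ∨ O_{2n}) = 3. -/
open Finset SimpleGraph
open scoped Classical

/-- The induced vertex label (weight) of `x`: the sum of `f` over all edges incident to `x`. -/
noncomputable def vertexWeight {V : Type*} [Fintype V] (G : SimpleGraph V)
    (f : Sym2 V → ℕ) (x : V) : ℕ :=
  ∑ e ∈ G.edgeFinset.filter (fun e => x ∈ e), f e

/-- `f` is a local antimagic labeling of `G`: it restricts to a bijection from the edge set of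
`G` onto `{1, …, q}` (where `q` is the number of edges), and adjacent vertices get distinct
induced vertex labels. -/
def IsLocalAntimagic {V : Type*} [Fintype V] (G : SimpleGraph V) (f : Sym2 V → ℕ) : Prop :=
  Set.BijOn f G.edgeSet (Set.Icc 1 G.edgeSet.ncard) ∧
  ∀ ⦃x y : V⦄, G.Adj x y → vertexWeight G f x ≠ vertexWeight G f y

/-- The number of distinct induced vertex labels, `c(f)`. -/
noncomputable def colorCount {V : Type*} [Fintype V] (G : SimpleGraph V)
    (f : Sym2 V → ℕ) : ℕ :=
  (Finset.univ.image (vertexWeight G f)).card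

/-- The local antimagic chromatic number `χ_la(G)`. -/
noncomputable def chiLA {V : Type*} [Fintype V] (G : SimpleGraph V) : ℕ :=
  sInf { n | ∃ f : Sym2 V → ℕ, IsLocalAntimagic G f ∧ colorCount G f = n }

/-- The join `G ∨ H` of two vertex-disjoint graphs. -/
def joinG {α β : Type*} (G : SimpleGraph α) (H : SimpleGraph β) : SimpleGraph (α ⊕ β) :=
  SimpleGraph.fromRel (fun x y =>
    (∃ a b, x = Sum.inl a ∧ y = Sum.inl b ∧ G.Adj a b) ∨
    (∃ a b, x = Sum.inr a ∧ y = Sum.inr b ∧ H.Adj a b) ∨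
    (∃ a b, x = Sum.inl a ∧ y = Sum.inr b))

lemma vertexWeight_eq_sum_ite {V : Type*} [Fintype V] (G : SimpleGraph V)
    (f : Sym2 V → ℕ) (x : V) :
    vertexWeight G f x = ∑ y : V, if G.Adj x y then f (s(x, y)) else 0 := by
  classical
  rw [← Finset.sum_filter, vertexWeight]
  refine Finset.sum_nbij' (i := fun e => if h : x ∈ e then Sym2.Mem.other h else x)
    (j := fun y => s(x, y)) ?_ ?_ ?_ ?_ ?_
  · intro e he
    simp only [Finset.mem_filter, mem_edgeFinset] at he
    obtain ⟨he1, he2⟩ := he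
    rw [dif_pos he2]
    simp only [Finset.mem_filter, Finset.mem_univ, true_and]
    have h2 := Sym2.other_spec he2
    rw [← mem_edgeSet]
    rw [h2]
    exact he1
  · intro y hy
    simp only [Finset.mem_filter, Finset.mem_univ, true_and] at hy
    simp only [Finset.mem_filter, mem_edgeFinset, mem_edgeSet]
    exact ⟨hy, Sym2.mem_mk_left x y⟩
  · intro e he
    simp only [Finset.mem_filter, mem_edgeFinset] at he
    rw [dif_pos he.2]
    exact Sym2.other_spec he.2
  · intro y hy
    simp only [Finset.mem_filter, Finset.mem_univ, true_and] at hy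
    have hx : x ∈ s(x, y) := Sym2.mem_mk_left x y
    rw [dif_pos hx]
    have := Sym2.other_spec hx
    exact (Sym2.congr_right.mp this)
  · intro e he
    simp only [Finset.mem_filter, mem_edgeFinset] at he
    rw [dif_pos he.2]
    rw [Sym2.other_spec he.2]


section adj
variable {α β : Type*} (G : SimpleGraph α) (H : SimpleGraph β)

@[simp] lemma joinG_adj_inl_inl {a b : α} :
    (joinG G H).Adj (Sum.inl a) (Sum.inl b) ↔ G.Adj a b := by
  simp only [joinG, SimpleGraph.fromRel_adj]
  constructor
  · rintro ⟨hne, (⟨a', b', h1, h2, h3⟩ | ⟨a', b', h1, h2, h3⟩ | ⟨a', b', h1, h2⟩) |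
      (⟨a', b', h1, h2, h3⟩ | ⟨a', b', h1, h2, h3⟩ | ⟨a', b', h1, h2⟩)⟩ <;> simp_all
    exact h3.symm
  · intro h
    exact ⟨by simp [h.ne], Or.inl (Or.inl ⟨a, b, rfl, rfl, h⟩)⟩

@[simp] lemma joinG_adj_inl_inr {a : α} {b : β} :
    (joinG G H).Adj (Sum.inl a) (Sum.inr b) := by
  simp only [joinG, SimpleGraph.fromRel_adj]
  exact ⟨by simp, Or.inl (Or.inr (Or.inr ⟨a, b, rfl, rfl⟩))⟩

@[simp] lemma joinG_adj_inr_inl {a : α} {b : β} :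
    (joinG G H).Adj (Sum.inr b) (Sum.inl a) := (joinG_adj_inl_inr G H).symm

@[simp] lemma joinG_adj_inr_inr {a b : β} :
    (joinG G H).Adj (Sum.inr a) (Sum.inr b) ↔ H.Adj a b := by
  simp only [joinG, SimpleGraph.fromRel_adj]
  constructor
  · rintro ⟨hne, (⟨a', b', h1, h2, h3⟩ | ⟨a', b', h1, h2, h3⟩ | ⟨a', b', h1, h2⟩) |
      (⟨a', b', h1, h2, h3⟩ | ⟨a', b', h1, h2, h3⟩ | ⟨a', b', h1, h2⟩)⟩ <;> simp_all
    exact h3.symm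
  · intro h
    exact ⟨by simp [h.ne], Or.inl (Or.inr (Or.inl ⟨a, b, rfl, rfl, h⟩))⟩
end adj


section inst
variable (m n : ℕ)

/-- path edge labels: edge k joins path vertices k,k+1 (0-indexed), k < 2m-1 -/
def plf (k : ℕ) : ℕ := if (k+1) % 2 = 0 then k+1 else 2*m - (k+1)

/-- B-digit of join label -/
def Bf (i j : ℕ) : ℕ :=
  if i % 2 = 0 then (if n ≤ j ∧ j < 2*n - 1 then 2*n - 1 - j else j)
  else (if n ≤ j ∧ j < 2*n - 1 then j else 2*n - 1 - j)

/-- A-digit of join label -/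
def Af (i j : ℕ) : ℕ :=
  if j < n then i
  else if j < 2*n - 1 then 2*m - 1 - i
  else (if i < 2*m - 1 then 2*m - 2 - i else 2*m - 1)

/-- join edge labels -/
def jlf (i j : ℕ) : ℕ := 2*m + 2*m * Bf n i j + Af m n i j

lemma plf_lo (hm : 1 ≤ m) : ∀ k < 2*m-1, 1 ≤ plf m k := by
  intro k hk; rw [plf]; split_ifs <;> omega

lemma plf_hi (hm : 1 ≤ m) : ∀ k < 2*m-1, plf m k ≤ 2*m-1 := by
  intro k hk; rw [plf]; split_ifs <;> omega

lemma plf_inj : ∀ k < 2*m-1, ∀ k' < 2*m-1, plf m k = plf m k' → k = k' := by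
  intro k hk k' hk' h; rw [plf, plf] at h; split_ifs at h <;> omega

lemma Bf_lt (hn : 1 ≤ n) (i j : ℕ) (hj : j < 2*n) : Bf n i j ≤ 2*n - 1 := by
  rw [Bf]; split_ifs <;> omega

lemma Af_lt (hm : 1 ≤ m) (i j : ℕ) (hi : i < 2*m) : Af m n i j ≤ 2*m - 1 := by
  rw [Af]; split_ifs <;> omega

lemma jlf_lo : ∀ i < 2*m, ∀ j < 2*n, 2*m ≤ jlf m n i j := by
  intro i _ j _; rw [jlf]; omega

lemma jlf_hi (hm : 1 ≤ m) (hn : 1 ≤ n) :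
    ∀ i < 2*m, ∀ j < 2*n, jlf m n i j ≤ 4*m*n + 2*m - 1 := by
  intro i hi j hj
  have hB := Bf_lt n hn i j hj
  have hA := Af_lt m n hm i j hi
  have h1 : 2*m * Bf n i j ≤ 2*m * (2*n-1) := Nat.mul_le_mul_left _ hB
  have h2 : 2*m * (2*n-1) + 2*m = 4*m*n := by
    obtain ⟨n', rfl⟩ : ∃ n', n = n' + 1 := ⟨n-1, by omega⟩
    have : 2*(n'+1) - 1 = 2*n' + 1 := by omega
    rw [this]; ring
  rw [jlf]; omega

lemma digits_eq (M b a b' a' : ℕ) (hM : 0 < M) (ha : a < M) (ha' : a' < M)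
    (h : M + M*b + a = M + M*b' + a') : a = a' ∧ b = b' := by
  have e1 : M + M*b + a = M*(1+b) + a := by ring
  have e2 : M + M*b' + a' = M*(1+b') + a' := by ring
  rw [e1, e2] at h
  have m1 := congrArg (· % M) h
  simp only [Nat.mul_add_mod] at m1
  rw [Nat.mod_eq_of_lt ha, Nat.mod_eq_of_lt ha'] at m1
  refine ⟨m1, ?_⟩
  rw [m1] at h
  have h4 : M*(1+b) = M*(1+b') := by omega
  have := Nat.eq_of_mul_eq_mul_left hM h4
  omega

set_option maxHeartbeats 2000000 in
lemma jlf_inj (hm : 1 ≤ m) (hn : 1 ≤ n) : ∀ i < 2*m, ∀ j < 2*n, ∀ i' < 2*m, ∀ j' < 2*n,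
    jlf m n i j = jlf m n i' j' → i = i' ∧ j = j' := by
  intro i hi j hj i' hi' j' hj' h
  rw [jlf, jlf] at h
  have hA := Af_lt m n hm i j hi
  have hA' := Af_lt m n hm i' j' hi'
  -- extract digits
  obtain ⟨hAeq, hBeq⟩ := digits_eq (2*m) _ _ _ _ (by omega) (by omega) (by omega) h
  rw [Af, Af] at hAeq
  rw [Bf, Bf] at hBeq
  split_ifs at hAeq hBeq <;> omega

set_option maxHeartbeats 2000000 in
lemma jlf_surj (hm : 1 ≤ m) (hn : 1 ≤ n) : ∀ v, 1 ≤ v → v ≤ 4*m*n + 2*m - 1 →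
    (∃ k, k < 2*m-1 ∧ plf m k = v) ∨ (∃ i j, i < 2*m ∧ j < 2*n ∧ jlf m n i j = v) := by
  intro v hv1 hv2
  by_cases hsmall : v ≤ 2*m - 1
  · left
    refine ⟨if v % 2 = 0 then v - 1 else 2*m - 1 - v, ?_, ?_⟩
    · split_ifs <;> omega
    · rw [plf]; split_ifs <;> omega
  · right
    set e := v - 2*m with he
    have h2m : 0 < 2*m := by omega
    obtain ⟨B, A, hdm, hAlt⟩ : ∃ B A, 2*m * B + A = e ∧ A < 2*m :=
      ⟨e / (2*m), e % (2*m), Nat.div_add_mod e (2*m), Nat.mod_lt _ h2m⟩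
    have hprod : 2*m*(2*n) = 4*m*n := by ring
    have hBlt : B < 2*n := by
      rcases Nat.lt_or_ge B (2*n) with h | h
      · exact h
      · exfalso
        have : 2*m*(2*n) ≤ 2*m*B := Nat.mul_le_mul_left _ h
        omega
    have hgoal : ∀ i j, i < 2*m → j < 2*n → Bf n i j = B → Af m n i j = A →
        jlf m n i j = v := by
      intro i j hi hj hBf hAf
      rw [jlf, hBf, hAf]; omega
    by_cases hBlow : B < n
    · by_cases hApar : A % 2 = 0
      · -- (i,j) = (A, B)
        refine ⟨A, B, by omega, by omega, hgoal A B (by omega) (by omega) ?_ ?_⟩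
        · rw [Bf, if_pos hApar, if_neg (by omega)]
        · rw [Af, if_pos hBlow]
      · by_cases hB0 : B = 0
        · -- j = 2n-1, i via π'
          by_cases hAtop : A = 2*m - 1
          · refine ⟨2*m-1, 2*n-1, by omega, by omega, hgoal _ _ (by omega) (by omega) ?_ ?_⟩
            · rw [Bf, if_neg (by omega), if_neg (by omega)]; omega
            · rw [Af, if_neg (by omega), if_neg (by omega), if_neg (by omega)]; omega
          · refine ⟨2*m-2-A, 2*n-1, by omega, by omega, hgoal _ _ (by omega) (by omega) ?_ ?_⟩
            · rw [Bf, if_neg (by omega), if_neg (by omega)]; omega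
            · rw [Af, if_neg (by omega), if_neg (by omega), if_pos (by omega)]; omega
        · -- j = 2n-1-B (hi), i = 2m-1-A even
          refine ⟨2*m-1-A, 2*n-1-B, by omega, by omega, hgoal _ _ (by omega) (by omega) ?_ ?_⟩
          · rw [Bf, if_pos (by omega), if_pos (by omega)]; omega
          · rw [Af, if_neg (by omega), if_pos (by omega)]; omega
    · by_cases hApar : A % 2 = 0
      · by_cases hBtop : B = 2*n - 1
        · -- i = 2m-2-A even, j = 2n-1
          refine ⟨2*m-2-A, 2*n-1, by omega, by omega, hgoal _ _ (by omega) (by omega) ?_ ?_⟩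
          · rw [Bf, if_pos (by omega), if_neg (by omega)]; omega
          · rw [Af, if_neg (by omega), if_neg (by omega), if_pos (by omega)]; omega
        · -- i = 2m-1-A odd, j = B (hi)
          refine ⟨2*m-1-A, B, by omega, by omega, hgoal _ _ (by omega) (by omega) ?_ ?_⟩
          · rw [Bf, if_neg (by omega), if_pos (by omega)]
          · rw [Af, if_neg (by omega), if_pos (by omega)]; omega
      · -- i = A odd, j = 2n-1-B low
        refine ⟨A, 2*n-1-B, by omega, by omega, hgoal _ _ (by omega) (by omega) ?_ ?_⟩
        · rw [Bf, if_neg (by omega), if_neg (by omega)]; omega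
        · rw [Af, if_pos (by omega)]

lemma sum_range_double (f : ℕ → ℕ) (M : ℕ) :
    ∑ i ∈ range (2*M), f i = ∑ k ∈ range M, (f (2*k) + f (2*k+1)) := by
  induction M with
  | zero => simp
  | succ M ih =>
      have h2 : 2*(M+1) = (2*M) + 1 + 1 := by ring
      rw [h2, Finset.sum_range_succ, Finset.sum_range_succ, ih, Finset.sum_range_succ]
      omega

lemma sum_range_split (f : ℕ → ℕ) (a b : ℕ) :
    ∑ i ∈ range (a+b), f i = (∑ i ∈ range a, f i) + ∑ i ∈ range b, f (a+i) := by
  induction b with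
  | zero => simp
  | succ b ih => rw [← Nat.add_assoc, Finset.sum_range_succ, ih, Finset.sum_range_succ, add_assoc]

lemma gauss (t : ℕ) : 2 * (∑ i ∈ range t, i) = t*(t-1) := by
  rw [mul_comm]
  exact Finset.sum_range_id_mul_two t

lemma hcol_calc (hm : 1 ≤ m) (hn : 1 ≤ n) : ∀ j < 2*n,
    (∑ i ∈ Finset.range (2*m), jlf m n i j) = 4*m*m*n + 4*m*m - m := by
  intro j hj
  have hsplit : (∑ i ∈ Finset.range (2*m), jlf m n i j)
      = (∑ i ∈ Finset.range (2*m), (2*m : ℕ)) + 2*m * (∑ i ∈ Finset.range (2*m), Bf n i j)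
        + (∑ i ∈ Finset.range (2*m), Af m n i j) := by
    rw [Finset.mul_sum, ← Finset.sum_add_distrib, ← Finset.sum_add_distrib]
    rfl
  have hconst : (∑ i ∈ Finset.range (2*m), (2*m : ℕ)) = 2*m*(2*m) := by
    rw [Finset.sum_const, Finset.card_range, smul_eq_mul]
  have hBsum : (∑ i ∈ Finset.range (2*m), Bf n i j) = m * (2*n-1) := by
    rw [sum_range_double]
    have hpt : ∀ k, Bf n (2*k) j + Bf n (2*k+1) j = 2*n-1 := by
      intro k
      simp only [Bf]
      split_ifs <;> omega
    rw [Finset.sum_congr rfl fun k _ => hpt k, Finset.sum_const, Finset.card_range,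
      smul_eq_mul]
  have hAsum : (∑ i ∈ Finset.range (2*m), Af m n i j) = m * (2*m-1) := by
    have hg : 2 * (∑ i ∈ range (2*m), i) = 2*m*(2*m-1) := gauss (2*m)
    have hgm : 2*(m*(2*m-1)) = 2*m*(2*m-1) := by ring
    by_cases h1 : j < n
    · have hpt : ∀ i ∈ range (2*m), Af m n i j = i := fun i _ => by rw [Af, if_pos h1]
      rw [Finset.sum_congr rfl hpt]
      omega
    · by_cases h2 : j < 2*n - 1
      · have hpt : ∀ i ∈ range (2*m), Af m n i j = 2*m-1-i := fun i _ => by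
          rw [Af, if_neg h1, if_pos h2]
        rw [Finset.sum_congr rfl hpt,
          Finset.sum_range_reflect (fun i => i) (2*m)]
        omega
      · have hpt : ∀ i ∈ range (2*m), Af m n i j
            = if i < 2*m-1 then 2*m-2-i else 2*m-1 := fun i _ => by
          rw [Af, if_neg h1, if_neg h2]
        rw [Finset.sum_congr rfl hpt]
        have hsucc := Finset.sum_range_succ
          (fun i => if i < 2*m-1 then 2*m-2-i else 2*m-1) (2*m-1)
        rw [show 2*m-1+1 = 2*m by omega] at hsucc
        rw [hsucc, if_neg (by omega)]
        have hc : ∀ i ∈ range (2*m-1), (if i < 2*m-1 then 2*m-2-i else 2*m-1) = 2*m-1-1-i := by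
          intro i hi; rw [Finset.mem_range] at hi; rw [if_pos hi]; omega
        rw [Finset.sum_congr rfl hc, Finset.sum_range_reflect (fun i => i) (2*m-1)]
        have hg2 : 2 * (∑ i ∈ range (2*m-1), i) = (2*m-1)*(2*m-2) := gauss (2*m-1)
        have hlink : 2*(m*(2*m-1)) = (2*m-1)*(2*m-2) + 2*(2*m-1) := by
          obtain ⟨m', rfl⟩ : ∃ m', m = m' + 1 := ⟨m-1, by omega⟩
          have e1 : 2*(m'+1)-1 = 2*m'+1 := by omega
          have e2 : 2*(m'+1)-2 = 2*m' := by omega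
          rw [e1, e2]; ring
        omega
  rw [hsplit, hconst, hBsum, hAsum]
  zify [show (1:ℕ) ≤ 2*n by omega, show (1:ℕ) ≤ 2*m by omega,
    show m ≤ 4*m*m*n + 4*m*m by nlinarith]
  ring


lemma sum_range_pred (f : ℕ → ℕ) (t : ℕ) (ht : 1 ≤ t) :
    ∑ j ∈ range t, f j = (∑ j ∈ range (t-1), f j) + f (t-1) := by
  have h := Finset.sum_range_succ f (t-1)
  rw [show t-1+1 = t by omega] at h
  exact h

lemma hBrow_even (hn : 1 ≤ n) (i : ℕ) (hpar : i % 2 = 0) :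
    (∑ j ∈ Finset.range (2*n), Bf n i j) = n*n + n - 1 := by
  have h2n : 2*n = n + n := by ring
  rw [h2n, sum_range_split]
  have hS1 : ∀ j ∈ range n, Bf n i j = j := by
    intro j hj; rw [Finset.mem_range] at hj
    rw [Bf, if_pos hpar, if_neg (by omega)]
  have hsucc := Finset.sum_range_succ (fun j => Bf n i (n + j)) (n-1)
  rw [show n-1+1 = n by omega] at hsucc
  have hS2a : ∀ j ∈ range (n-1), Bf n i (n + j) = n-1-j := by
    intro j hj; rw [Finset.mem_range] at hj
    rw [Bf, if_pos hpar, if_pos (by omega)]; omega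
  have hS2b : Bf n i (n + (n-1)) = 2*n-1 := by
    rw [Bf, if_pos hpar, if_neg (by omega)]; omega
  have hS2a' : ∑ j ∈ range (n-1), (n-1-j) = (∑ j ∈ range (n-1), j) + (n-1) := by
    have hrefl := Finset.sum_range_reflect (fun t => t + 1) (n-1)
    have e : ∀ j ∈ range (n-1), (n-1-j) = (fun t => t + 1) (n-1-1-j) := by
      intro j hj; rw [Finset.mem_range] at hj; simp; omega
    rw [Finset.sum_congr rfl e, hrefl, Finset.sum_add_distrib, Finset.sum_const,
      Finset.card_range, smul_eq_mul, mul_one]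
  rw [Finset.sum_congr rfl hS1, hsucc, Finset.sum_congr rfl hS2a, hS2b, hS2a']
  have hg1 := gauss n
  have hgpred : ∑ j ∈ range n, j = (∑ j ∈ range (n-1), j) + (n-1) := by
    have h := Finset.sum_range_succ (fun j => j) (n-1)
    rw [show n-1+1 = n by omega] at h
    simpa using h
  have pmm : n*(n-1) + n = n*n := by
    zify [show (1:ℕ) ≤ n from hn]; ring
  omega

lemma hBrow_odd (hn : 1 ≤ n) (i : ℕ) (hpar : i % 2 = 1) :
    (∑ j ∈ Finset.range (2*n), Bf n i j) = 3*n*n - 3*n + 1 := by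
  have h2n : 2*n = n + n := by ring
  rw [h2n, sum_range_split]
  have hS1 : ∀ j ∈ range n, Bf n i j = 2*n-1-j := by
    intro j hj; rw [Finset.mem_range] at hj
    rw [Bf, if_neg (by omega), if_neg (by omega)]
  have hsucc := Finset.sum_range_succ (fun j => Bf n i (n + j)) (n-1)
  rw [show n-1+1 = n by omega] at hsucc
  have hS2a : ∀ j ∈ range (n-1), Bf n i (n + j) = n + j := by
    intro j hj; rw [Finset.mem_range] at hj
    rw [Bf, if_neg (by omega), if_pos (by omega)]
  have hS2b : Bf n i (n + (n-1)) = 0 := by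
    rw [Bf, if_neg (by omega), if_neg (by omega)]; omega
  have hS1' : ∑ j ∈ range n, (2*n-1-j) = (∑ j ∈ range n, j) + n*n := by
    have hrefl := Finset.sum_range_reflect (fun t => n + t) n
    have e : ∀ j ∈ range n, (2*n-1-j) = (fun t => n + t) (n-1-j) := by
      intro j hj; rw [Finset.mem_range] at hj; simp; omega
    rw [Finset.sum_congr rfl e, hrefl, Finset.sum_add_distrib, Finset.sum_const,
      Finset.card_range, smul_eq_mul]
    omega
  rw [Finset.sum_congr rfl hS1, hsucc, Finset.sum_congr rfl hS2a, hS2b, hS1',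
    Finset.sum_add_distrib, Finset.sum_const, Finset.card_range, smul_eq_mul]
  have hg1 := gauss n
  have hgpred : ∑ j ∈ range n, j = (∑ j ∈ range (n-1), j) + (n-1) := by
    have h := Finset.sum_range_succ (fun j => j) (n-1)
    rw [show n-1+1 = n by omega] at h
    simpa using h
  have pmm : n*(n-1) + n = n*n := by
    zify [show (1:ℕ) ≤ n from hn]; ring
  have pmm2 : (n-1)*n + n = n*n := by
    zify [show (1:ℕ) ≤ n from hn]; ring
  have pmm3 : 3*(n*n) = 3*n*n := by ring
  omega

lemma hArow (hm : 1 ≤ m) (hn : 1 ≤ n) (i : ℕ) (hi : i < 2*m) :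
    (∑ j ∈ Finset.range (2*n), Af m n i j)
      = n*i + (n-1)*(2*m-1-i) + (if i < 2*m-1 then 2*m-2-i else 2*m-1) := by
  have h2n : 2*n = n + n := by ring
  rw [h2n, sum_range_split]
  have hS1 : ∀ j ∈ range n, Af m n i j = i := by
    intro j hj; rw [Finset.mem_range] at hj
    rw [Af, if_pos (by omega)]
  have hsucc := Finset.sum_range_succ (fun j => Af m n i (n + j)) (n-1)
  rw [show n-1+1 = n by omega] at hsucc
  have hS2a : ∀ j ∈ range (n-1), Af m n i (n + j) = 2*m-1-i := by
    intro j hj; rw [Finset.mem_range] at hj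
    rw [Af, if_neg (by omega), if_pos (by omega)]
  have hS2b : Af m n i (n + (n-1)) = if i < 2*m-1 then 2*m-2-i else 2*m-1 := by
    rw [Af, if_neg (by omega), if_neg (by omega)]
  rw [Finset.sum_congr rfl hS1, hsucc, Finset.sum_congr rfl hS2a, hS2b,
    Finset.sum_const, Finset.sum_const, Finset.card_range, Finset.card_range,
    smul_eq_mul, smul_eq_mul]
  ring

lemma hrow_calc (hm : 1 ≤ m) (hn : 1 ≤ n) : ∀ i < 2*m,
    ((if 1 ≤ i then plf m (i-1) else 0) + (if i+1 < 2*m then plf m i else 0))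
      + (∑ j ∈ Finset.range (2*n), jlf m n i j)
    = if i % 2 = 0 then (2*m*n*n + 8*m*n - (n + 2)) else (6*m*n*n + 4*m - n) := by
  intro i hi
  have hsplit : (∑ j ∈ Finset.range (2*n), jlf m n i j)
      = (∑ j ∈ Finset.range (2*n), (2*m : ℕ)) + 2*m * (∑ j ∈ Finset.range (2*n), Bf n i j)
        + (∑ j ∈ Finset.range (2*n), Af m n i j) := by
    rw [Finset.mul_sum, ← Finset.sum_add_distrib, ← Finset.sum_add_distrib]
    rfl
  have hconst : (∑ j ∈ Finset.range (2*n), (2*m : ℕ)) = 2*n*(2*m) := by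
    rw [Finset.sum_const, Finset.card_range, smul_eq_mul]
  have hA := hArow m n hm hn i hi
  have h8 : 8*n ≤ 8*m*n := Nat.mul_le_mul_right n (by omega)
  have h8b : 8*m*n ≤ 2*m*n*n + 8*m*n := by omega
  have h6 : 6*n ≤ 6*m*n := Nat.mul_le_mul_right n (by omega)
  have h6b : 6*m*n ≤ 6*m*n*n := Nat.le_mul_of_pos_right (6*m*n) (by omega)
  have h3 : 3*n ≤ 3*n*n := Nat.le_mul_of_pos_right (3*n) (by omega)
  by_cases hpar : i % 2 = 0
  · have hB := hBrow_even n hn i hpar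
    have hps : ((if 1 ≤ i then plf m (i-1) else 0) + (if i+1 < 2*m then plf m i else 0))
        = 2*m-1 := by
      simp only [plf]; split_ifs <;> omega
    have hilt : i < 2*m-1 := by omega
    rw [hps, hsplit, hconst, hB, hA, if_pos hilt, if_pos hpar]
    zify [show (1:ℕ) ≤ 2*m by omega, show (1:ℕ) ≤ n from hn,
      show i ≤ 2*m-1 by omega, show i ≤ 2*m-2 by omega,
      show (1:ℕ) ≤ n*n + n by omega, show n + 2 ≤ 2*m*n*n + 8*m*n by omega,
      show (2:ℕ) ≤ 2*m by omega]
    ring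
  · have hB := hBrow_odd n hn i (by omega)
    by_cases hlast : i < 2*m-1
    · have hps : ((if 1 ≤ i then plf m (i-1) else 0) + (if i+1 < 2*m then plf m i else 0))
          = 2*m+1 := by
        simp only [plf]; split_ifs <;> omega
      rw [hps, hsplit, hconst, hB, hA, if_pos hlast, if_neg hpar]
      zify [show (1:ℕ) ≤ 2*m by omega, show (1:ℕ) ≤ n from hn,
        show i ≤ 2*m-1 by omega, show i ≤ 2*m-2 by omega,
        show 3*n ≤ 3*n*n from h3, show n ≤ 6*m*n*n + 4*m by omega,
        show (2:ℕ) ≤ 2*m by omega]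
      ring
    · have hieq : i = 2*m-1 := by omega
      have hps : ((if 1 ≤ i then plf m (i-1) else 0) + (if i+1 < 2*m then plf m i else 0))
          = 1 := by
        simp only [plf]; split_ifs <;> omega
      rw [hps, hsplit, hconst, hB, hA, if_neg hlast, if_neg hpar, hieq]
      rw [show 2*m-1-(2*m-1) = 0 by omega, Nat.mul_zero, add_zero]
      zify [show (1:ℕ) ≤ 2*m by omega, show (1:ℕ) ≤ n from hn,
        show 3*n ≤ 3*n*n from h3, show n ≤ 6*m*n*n + 4*m by omega]
      ring

lemma xy_ne (hm : 1 ≤ m) (hn : 1 ≤ n) :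
    2*m*n*n + 8*m*n - (n + 2) ≠ 6*m*n*n + 4*m - n := by
  have h8 : 8*n ≤ 8*m*n := Nat.mul_le_mul_right n (by omega)
  have h6 : 6*n ≤ 6*m*n := Nat.mul_le_mul_right n (by omega)
  have h6b : 6*m*n ≤ 6*m*n*n := Nat.le_mul_of_pos_right (6*m*n) (by omega)
  intro h
  zify [show n + 2 ≤ 2*m*n*n + 8*m*n by omega, show n ≤ 6*m*n*n + 4*m by omega] at h
  have hM1 : (1:ℤ) ≤ (m:ℤ) := by exact_mod_cast hm
  have hN1 : (1:ℤ) ≤ (n:ℤ) := by exact_mod_cast hn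
  nlinarith [h, hM1, hN1, mul_nonneg (by linarith : (0:ℤ) ≤ (m:ℤ))
    (sq_nonneg ((n:ℤ) - 1))]

lemma xC_ne (hm : 1 ≤ m) (hn : 1 ≤ n) (hex : ¬(m = 1 ∧ n = 1)) :
    2*m*n*n + 8*m*n - (n + 2) ≠ 4*m*m*n + 4*m*m - m := by
  have h8 : 8*n ≤ 8*m*n := Nat.mul_le_mul_right n (by omega)
  intro h
  zify [show n + 2 ≤ 2*m*n*n + 8*m*n by omega,
    show m ≤ 4*m*m*n + 4*m*m by nlinarith] at h
  have hM1 : (1:ℤ) ≤ (m:ℤ) := by exact_mod_cast hm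
  have hN1 : (1:ℤ) ≤ (n:ℤ) := by exact_mod_cast hn
  have hU : (n:ℤ) = (m:ℤ) - 2 + 2*m*((n:ℤ)*n + 4*n - 2*m*n - 2*m) := by
    linear_combination -h
  set T : ℤ := (n:ℤ)*n + 4*n - 2*m*n - 2*m with hTdef
  rcases lt_trichotomy T 0 with h1 | h1 | h1
  · have hTm : T ≤ -1 := by omega
    have hmul : 2*(m:ℤ)*T ≤ 2*(m:ℤ)*(-1) :=
      mul_le_mul_of_nonneg_left hTm (by linarith)
    linarith
  · have hM2 : (m:ℤ) = (n:ℤ) + 2 := by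
      rw [h1] at hU; linarith
    have key0 : 2*(n:ℤ)^3 + 8*(n:ℤ)^2 + 16*n + 16 = 0 := by
      linear_combination (-1)*h - (7 + 4*(n:ℤ) + 2*(n:ℤ)^2 + 4*(m:ℤ) + 4*(m:ℤ)*n) * hM2
    nlinarith [key0, hN1, sq_nonneg ((n:ℤ)), mul_pos (show (0:ℤ) < n by linarith)
      (mul_pos (show (0:ℤ) < n by linarith) (show (0:ℤ) < n by linarith))]
  · have hT1 : 1 ≤ T := by omega
    have key1 : 8*(m:ℤ)^3*T^2 - 2*(m:ℤ)^3 + 4*(m:ℤ)^2 - 2*(m:ℤ)*T - 8*(m:ℤ) = 0 := by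
      rw [hTdef]
      linear_combination h + (1 - 4*(m:ℤ) - 2*(m:ℤ)*n + 2*(m:ℤ)^2 - 4*(m:ℤ)^2*((n:ℤ)*n + 4*n - 2*m*n - 2*m)) * hU
    by_cases hT2 : 2 ≤ T
    · nlinarith [key1, hM1, hT2, mul_pos (show (0:ℤ) < m by linarith) (show (0:ℤ) < T by linarith),
        sq_nonneg ((m:ℤ)*T), sq_nonneg ((m:ℤ)*T - 1), mul_pos (mul_pos (show (0:ℤ) < m by linarith)
          (show (0:ℤ) < m by linarith)) (show (0:ℤ) < T by linarith)]
    · have hTeq : T = 1 := by omega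
      have hm2 : 2 ≤ (m:ℤ) := by
        by_contra hc
        have hmeq : (m:ℤ) = 1 := by omega
        have hneq : (n:ℤ) = 1 := by rw [hTeq, hmeq] at hU; linarith
        exact hex ⟨by exact_mod_cast hmeq, by exact_mod_cast hneq⟩
      rw [hTeq] at key1
      nlinarith [key1, hm2, mul_pos (show (0:ℤ) < m by linarith) (show (0:ℤ) < m by linarith)]

lemma yC_ne (hm : 1 ≤ m) (hn : 1 ≤ n) :
    6*m*n*n + 4*m - n ≠ 4*m*m*n + 4*m*m - m := by
  have h6 : 6*n ≤ 6*m*n := Nat.mul_le_mul_right n (by omega)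
  have h6b : 6*m*n ≤ 6*m*n*n := Nat.le_mul_of_pos_right (6*m*n) (by omega)
  intro h
  zify [show n ≤ 6*m*n*n + 4*m by omega,
    show m ≤ 4*m*m*n + 4*m*m by nlinarith] at h
  have hM1 : (1:ℤ) ≤ (m:ℤ) := by exact_mod_cast hm
  have hN1 : (1:ℤ) ≤ (n:ℤ) := by exact_mod_cast hn
  have hU : (n:ℤ) = (m:ℤ) + 2*m*(3*(n:ℤ)*n + 2 - 2*m*n - 2*m) := by
    linear_combination -h
  set T : ℤ := 3*(n:ℤ)*n + 2 - 2*m*n - 2*m with hTdef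
  rcases lt_or_ge T 0 with h1 | h1
  · have hTm : T ≤ -1 := by omega
    have hmul : 2*(m:ℤ)*T ≤ 2*(m:ℤ)*(-1) :=
      mul_le_mul_of_nonneg_left hTm (by linarith)
    linarith
  · have key2 : 24*(m:ℤ)^3*T^2 + 16*(m:ℤ)^3*T + 2*(m:ℤ)^3 - 4*(m:ℤ)^2 + 4*(m:ℤ) - 2*(m:ℤ)*T = 0 := by
      rw [hTdef]
      linear_combination h + (1 - 6*(m:ℤ)*n - 2*(m:ℤ)^2 - 12*(m:ℤ)^2*(3*(n:ℤ)*n + 2 - 2*m*n - 2*m)) * hU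
    nlinarith [key2, hM1, h1, sq_nonneg ((m:ℤ) - 1), sq_nonneg ((m:ℤ)*T),
      mul_nonneg (mul_nonneg (show (0:ℤ) ≤ m by linarith) (show (0:ℤ) ≤ m by linarith)) h1,
      mul_nonneg (show (0:ℤ) ≤ m by linarith) h1]
end inst

section master
variable (m n : ℕ) (pl : ℕ → ℕ) (jl : ℕ → ℕ → ℕ)

def Fd : (Fin (2*m) ⊕ Fin (2*n)) → (Fin (2*m) ⊕ Fin (2*n)) → ℕ
  | .inl a, .inl b =>
      if a.val + 1 = b.val then pl a.val else if b.val + 1 = a.val then pl b.val else 0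
  | .inl a, .inr j => jl a.val j.val
  | .inr j, .inl a => jl a.val j.val
  | .inr _, .inr _ => 0

lemma Fd_symm : ∀ u v, Fd m n pl jl u v = Fd m n pl jl v u := by
  rintro (a | i) (b | j) <;> simp only [Fd] <;> split_ifs <;> first | rfl | omega

noncomputable def fd : Sym2 (Fin (2*m) ⊕ Fin (2*n)) → ℕ :=
  Sym2.lift ⟨fun u v => Fd m n pl jl u v, Fd_symm m n pl jl⟩

lemma fd_mk (u v : Fin (2*m) ⊕ Fin (2*n)) : fd m n pl jl (s(u, v)) = Fd m n pl jl u v := rfl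

variable {m n}

lemma wt_inr (hm : 1 ≤ m) (hn : 1 ≤ n) (Cw : ℕ)
    (hcol : ∀ j < 2*n, (∑ i ∈ Finset.range (2*m), jl i j) = Cw) (j : Fin (2*n)) :
    vertexWeight (joinG (pathGraph (2*m)) (⊥ : SimpleGraph (Fin (2*n)))) (fd m n pl jl)
      (Sum.inr j) = Cw := by
  rw [vertexWeight_eq_sum_ite, Fintype.sum_sum_type]
  have h1 : ∀ a : Fin (2*m),
      (if (joinG (pathGraph (2*m)) (⊥ : SimpleGraph (Fin (2*n)))).Adj (Sum.inr j) (Sum.inl a)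
        then fd m n pl jl (s(Sum.inr j, Sum.inl a)) else 0) = jl a.val j.val := by
    intro a
    rw [if_pos (joinG_adj_inr_inl _ _), fd_mk]
    rfl
  have h2 : ∀ b : Fin (2*n),
      (if (joinG (pathGraph (2*m)) (⊥ : SimpleGraph (Fin (2*n)))).Adj (Sum.inr j) (Sum.inr b)
        then fd m n pl jl (s(Sum.inr j, Sum.inr b)) else 0) = 0 := by
    intro b
    rw [if_neg]
    rw [joinG_adj_inr_inr]
    exact fun h => h.elim  -- bot adj
  rw [Finset.sum_congr rfl fun a _ => h1 a, Finset.sum_congr rfl fun b _ => h2 b,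
    Finset.sum_const_zero, add_zero]
  rw [Fin.sum_univ_eq_sum_range (fun i => jl i j.val) (2*m)]
  · exact hcol j.val j.isLt

lemma wt_inl (hm : 1 ≤ m) (x y : ℕ)
    (hrow : ∀ i < 2*m, ((if 1 ≤ i then pl (i-1) else 0) + (if i+1 < 2*m then pl i else 0))
      + (∑ j ∈ Finset.range (2*n), jl i j) = if i % 2 = 0 then x else y) (a : Fin (2*m)) :
    vertexWeight (joinG (pathGraph (2*m)) (⊥ : SimpleGraph (Fin (2*n)))) (fd m n pl jl)
      (Sum.inl a) = if a.val % 2 = 0 then x else y := by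
  rw [vertexWeight_eq_sum_ite, Fintype.sum_sum_type]
  have h2 : ∀ j : Fin (2*n),
      (if (joinG (pathGraph (2*m)) (⊥ : SimpleGraph (Fin (2*n)))).Adj (Sum.inl a) (Sum.inr j)
        then fd m n pl jl (s(Sum.inl a, Sum.inr j)) else 0) = jl a.val j.val := by
    intro j
    rw [if_pos (joinG_adj_inl_inr _ _), fd_mk]
    rfl
  rw [Finset.sum_congr rfl fun j _ => h2 j,
    Fin.sum_univ_eq_sum_range (fun j => jl a.val j) (2*n)]
  have h1 : ∀ b : Fin (2*m),
      (if (joinG (pathGraph (2*m)) (⊥ : SimpleGraph (Fin (2*n)))).Adj (Sum.inl a) (Sum.inl b)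
        then fd m n pl jl (s(Sum.inl a, Sum.inl b)) else 0)
      = (if b.val + 1 = a.val then pl b.val else 0)
        + (if a.val + 1 = b.val then pl a.val else 0) := by
    intro b
    rw [joinG_adj_inl_inl, fd_mk]
    show (if (pathGraph (2*m)).Adj a b then
      (if a.val + 1 = b.val then pl a.val else if b.val + 1 = a.val then pl b.val else 0) else 0) = _
    rw [pathGraph_adj]
    split_ifs <;> omega
  rw [Finset.sum_congr rfl fun b _ => h1 b, Finset.sum_add_distrib]
  have e1 : (∑ b : Fin (2*m), if b.val + 1 = a.val then pl b.val else 0)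
      = if 1 ≤ a.val then pl (a.val - 1) else 0 := by
    by_cases ha : 1 ≤ a.val
    · have hlt : a.val - 1 < 2*m := by omega
      have : ∀ b : Fin (2*m), (if b.val + 1 = a.val then pl b.val else 0)
          = if b = ⟨a.val - 1, hlt⟩ then pl (a.val - 1) else 0 := by
        intro b
        by_cases hb : b.val + 1 = a.val
        · rw [if_pos hb, if_pos (by ext; simp; omega), show b.val = a.val - 1 by omega]
        · rw [if_neg hb, if_neg (by intro h; apply hb; rw [h]; simp; omega)]
      rw [Finset.sum_congr rfl fun b _ => this b, Finset.sum_ite_eq' Finset.univ,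
        if_pos (Finset.mem_univ _), if_pos ha]
    · have : ∀ b : Fin (2*m), (if b.val + 1 = a.val then pl b.val else 0) = 0 := by
        intro b; rw [if_neg]; omega
      rw [Finset.sum_congr rfl fun b _ => this b, Finset.sum_const_zero, if_neg ha]
  have e2 : (∑ b : Fin (2*m), if a.val + 1 = b.val then pl a.val else 0)
      = if a.val + 1 < 2*m then pl a.val else 0 := by
    by_cases ha : a.val + 1 < 2*m
    · have : ∀ b : Fin (2*m), (if a.val + 1 = b.val then pl a.val else 0)
          = if b = ⟨a.val + 1, ha⟩ then pl a.val else 0 := by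
        intro b
        by_cases hb : a.val + 1 = b.val
        · rw [if_pos hb, if_pos (by ext; simp; omega)]
        · rw [if_neg hb, if_neg (by intro h; apply hb; rw [h])]
      rw [Finset.sum_congr rfl fun b _ => this b, Finset.sum_ite_eq' Finset.univ,
        if_pos (Finset.mem_univ _), if_pos ha]
    · have : ∀ b : Fin (2*m), (if a.val + 1 = b.val then pl a.val else 0) = 0 := by
        intro b; rw [if_neg]; have := b.isLt; omega
      rw [Finset.sum_congr rfl fun b _ => this b, Finset.sum_const_zero, if_neg ha]
  rw [e1, e2]
  exact hrow a.val a.isLt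

lemma edge_cases {e : Sym2 (Fin (2*m) ⊕ Fin (2*n))}
    (he : e ∈ (joinG (pathGraph (2*m)) (⊥ : SimpleGraph (Fin (2*n)))).edgeSet) :
    (∃ a b : Fin (2*m), a.val + 1 = b.val ∧ e = s(Sum.inl a, Sum.inl b)) ∨
    (∃ (i : Fin (2*m)) (j : Fin (2*n)), e = s(Sum.inl i, Sum.inr j)) := by
  induction e with
  | _ u v =>
    rw [SimpleGraph.mem_edgeSet] at he
    match u, v with
    | .inl a, .inl b =>
      rw [joinG_adj_inl_inl, pathGraph_adj] at he
      rcases he with h | h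
      · exact Or.inl ⟨a, b, h, rfl⟩
      · exact Or.inl ⟨b, a, h, Sym2.eq_swap⟩
    | .inl a, .inr j => exact Or.inr ⟨a, j, rfl⟩
    | .inr j, .inl a => exact Or.inr ⟨a, j, Sym2.eq_swap⟩
    | .inr i, .inr j =>
      rw [joinG_adj_inr_inr] at he
      exact absurd he (by simp)

lemma fd_path (a b : Fin (2*m)) (hab : a.val + 1 = b.val) :
    fd m n pl jl (s(Sum.inl a, Sum.inl b)) = pl a.val := by
  rw [fd_mk]
  show (if a.val + 1 = b.val then pl a.val else if b.val + 1 = a.val then pl b.val else 0) = _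
  rw [if_pos hab]

lemma fd_join (i : Fin (2*m)) (j : Fin (2*n)) :
    fd m n pl jl (s(Sum.inl i, Sum.inr j)) = jl i.val j.val := rfl

lemma bij_on (hm : 1 ≤ m) (hn : 1 ≤ n)
    (hpl_lo : ∀ k < 2*m-1, 1 ≤ pl k) (hpl_hi : ∀ k < 2*m-1, pl k ≤ 2*m-1)
    (hjl_lo : ∀ i < 2*m, ∀ j < 2*n, 2*m ≤ jl i j)
    (hjl_hi : ∀ i < 2*m, ∀ j < 2*n, jl i j ≤ 4*m*n + 2*m - 1)
    (hpl_inj : ∀ k < 2*m-1, ∀ k' < 2*m-1, pl k = pl k' → k = k')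
    (hjl_inj : ∀ i < 2*m, ∀ j < 2*n, ∀ i' < 2*m, ∀ j' < 2*n,
      jl i j = jl i' j' → i = i' ∧ j = j')
    (hsurj : ∀ v, 1 ≤ v → v ≤ 4*m*n + 2*m - 1 →
      (∃ k, k < 2*m-1 ∧ pl k = v) ∨ (∃ i j, i < 2*m ∧ j < 2*n ∧ jl i j = v)) :
    Set.BijOn (fd m n pl jl)
      (joinG (pathGraph (2*m)) (⊥ : SimpleGraph (Fin (2*n)))).edgeSet
      (Set.Icc 1 (4*m*n + 2*m - 1)) := by
  set G := joinG (pathGraph (2*m)) (⊥ : SimpleGraph (Fin (2*n))) with hG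
  have hval : ∀ e ∈ G.edgeSet, (1 ≤ fd m n pl jl e ∧ fd m n pl jl e ≤ 4*m*n + 2*m - 1) := by
    intro e he
    rcases edge_cases he with ⟨a, b, hab, rfl⟩ | ⟨i, j, rfl⟩
    · rw [fd_path pl jl a b hab]
      have hb := b.isLt
      have ha : a.val < 2*m - 1 := by omega
      have := hpl_lo a.val ha; have := hpl_hi a.val ha
      constructor <;> omega
    · rw [fd_join]
      have := hjl_lo i.val i.isLt j.val j.isLt
      have := hjl_hi i.val i.isLt j.val j.isLt
      constructor <;> omega
  refine ⟨fun e he => ?_, fun e1 he1 e2 he2 hf => ?_, fun v hv => ?_⟩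
  · exact hval e he
  · rcases edge_cases he1 with ⟨a, b, hab, rfl⟩ | ⟨i, j, rfl⟩ <;>
      rcases edge_cases he2 with ⟨a', b', hab', rfl⟩ | ⟨i', j', rfl⟩
    · rw [fd_path pl jl a b hab, fd_path pl jl a' b' hab'] at hf
      have hb := b.isLt; have hb' := b'.isLt
      have hav : a.val = a'.val := hpl_inj _ (by omega) _ (by omega) hf
      have hbv : b.val = b'.val := by omega
      have h1 : a = a' := Fin.ext hav
      have h2 : b = b' := Fin.ext hbv
      subst h1; subst h2; rfl
    · rw [fd_path pl jl a b hab, fd_join] at hf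
      have hb := b.isLt
      have := hpl_hi a.val (by omega)
      have := hjl_lo i'.val i'.isLt j'.val j'.isLt
      omega
    · rw [fd_path pl jl a' b' hab', fd_join] at hf
      have hb := b'.isLt
      have := hpl_hi a'.val (by omega)
      have := hjl_lo i.val i.isLt j.val j.isLt
      omega
    · rw [fd_join, fd_join] at hf
      obtain ⟨h1, h2⟩ := hjl_inj i.val i.isLt j.val j.isLt i'.val i'.isLt j'.val j'.isLt hf
      have : i = i' := Fin.ext h1
      have : j = j' := Fin.ext h2
      subst this; subst ‹i = i'›; rfl
  · obtain ⟨hv1, hv2⟩ := hv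
    rcases hsurj v hv1 hv2 with ⟨k, hk, hkv⟩ | ⟨i, j, hi, hj, hij⟩
    · refine ⟨s(Sum.inl ⟨k, by omega⟩, Sum.inl ⟨k+1, by omega⟩), ?_, ?_⟩
      · show _ ∈ G.edgeSet
        rw [SimpleGraph.mem_edgeSet, hG, joinG_adj_inl_inl, pathGraph_adj]
        left; rfl
      · rw [fd_path pl jl _ _ rfl]; exact hkv
    · refine ⟨s(Sum.inl ⟨i, hi⟩, Sum.inr ⟨j, hj⟩), ?_, ?_⟩
      · show _ ∈ G.edgeSet
        rw [SimpleGraph.mem_edgeSet, hG]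
        exact joinG_adj_inl_inr _ _
      · rw [fd_join]; exact hij

theorem master (hm : 1 ≤ m) (hn : 1 ≤ n) (x y Cw : ℕ)
    (hpl_lo : ∀ k < 2*m-1, 1 ≤ pl k) (hpl_hi : ∀ k < 2*m-1, pl k ≤ 2*m-1)
    (hjl_lo : ∀ i < 2*m, ∀ j < 2*n, 2*m ≤ jl i j)
    (hjl_hi : ∀ i < 2*m, ∀ j < 2*n, jl i j ≤ 4*m*n + 2*m - 1)
    (hpl_inj : ∀ k < 2*m-1, ∀ k' < 2*m-1, pl k = pl k' → k = k')
    (hjl_inj : ∀ i < 2*m, ∀ j < 2*n, ∀ i' < 2*m, ∀ j' < 2*n,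
      jl i j = jl i' j' → i = i' ∧ j = j')
    (hsurj : ∀ v, 1 ≤ v → v ≤ 4*m*n + 2*m - 1 →
      (∃ k, k < 2*m-1 ∧ pl k = v) ∨ (∃ i j, i < 2*m ∧ j < 2*n ∧ jl i j = v))
    (hrow : ∀ i < 2*m, ((if 1 ≤ i then pl (i-1) else 0) + (if i+1 < 2*m then pl i else 0))
      + (∑ j ∈ Finset.range (2*n), jl i j) = if i % 2 = 0 then x else y)
    (hcol : ∀ j < 2*n, (∑ i ∈ Finset.range (2*m), jl i j) = Cw)
    (hxy : x ≠ y) (hxC : x ≠ Cw) (hyC : y ≠ Cw) :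
    (sInf { k | ∃ f, IsLocalAntimagic (joinG (pathGraph (2*m)) (⊥ : SimpleGraph (Fin (2*n)))) f
      ∧ colorCount (joinG (pathGraph (2*m)) (⊥ : SimpleGraph (Fin (2*n)))) f = k }) = 3 := by
  classical
  set G := joinG (pathGraph (2*m)) (⊥ : SimpleGraph (Fin (2*n))) with hG
  set q := 4*m*n + 2*m - 1 with hq
  -- edge count
  have hbij := bij_on pl jl hm hn hpl_lo hpl_hi hjl_lo hjl_hi hpl_inj hjl_inj hsurj
  have hncard : G.edgeSet.ncard = q := by
    have h1 : (fd m n pl jl) '' G.edgeSet = Set.Icc 1 q := hbij.image_eq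
    have h2 : ((fd m n pl jl) '' G.edgeSet).ncard = G.edgeSet.ncard :=
      Set.ncard_image_of_injOn hbij.injOn
    rw [h1] at h2
    rw [← h2, ← Finset.coe_Icc, Set.ncard_coe_finset, Nat.card_Icc]
    omega
  -- membership of 3
  have hmem : 3 ∈ { k | ∃ f, IsLocalAntimagic G f ∧ colorCount G f = k } := by
    refine ⟨fd m n pl jl, ⟨?_, ?_⟩, ?_⟩
    · rw [hncard]; exact hbij
    · intro u v huv
      match u, v with
      | .inl a, .inl b =>
        rw [wt_inl pl jl hm x y hrow, wt_inl pl jl hm x y hrow]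
        rw [hG, joinG_adj_inl_inl, pathGraph_adj] at huv
        have hpar : a.val % 2 ≠ b.val % 2 := by omega
        by_cases ha : a.val % 2 = 0 <;> by_cases hb' : b.val % 2 = 0
        · omega
        · rw [if_pos ha, if_neg hb']; exact hxy
        · rw [if_neg ha, if_pos hb']; exact fun h => hxy h.symm
        · omega
      | .inl a, .inr j =>
        rw [wt_inl pl jl hm x y hrow, wt_inr pl jl hm hn Cw hcol]
        split_ifs <;> assumption
      | .inr j, .inl a =>
        rw [wt_inl pl jl hm x y hrow, wt_inr pl jl hm hn Cw hcol]
        split_ifs <;> (intro h; exact absurd h.symm (by assumption))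
      | .inr i, .inr j =>
        rw [hG, joinG_adj_inr_inr] at huv
        exact absurd huv (by simp)
    · -- colorCount = 3
      rw [colorCount]
      have himg : Finset.univ.image (vertexWeight G (fd m n pl jl)) = {x, y, Cw} := by
        ext w
        simp only [Finset.mem_image, Finset.mem_univ, true_and, Finset.mem_insert,
          Finset.mem_singleton]
        constructor
        · rintro ⟨v, rfl⟩
          match v with
          | .inl a =>
            rw [wt_inl pl jl hm x y hrow]
            split_ifs
            · exact Or.inl rfl
            · exact Or.inr (Or.inl rfl)
          | .inr j =>
            rw [wt_inr pl jl hm hn Cw hcol]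
            exact Or.inr (Or.inr rfl)
        · rintro (h | h | h)
          · refine ⟨Sum.inl ⟨0, by omega⟩, ?_⟩
            rw [wt_inl pl jl hm x y hrow, if_pos (by norm_num), h]
          · refine ⟨Sum.inl ⟨1, by omega⟩, ?_⟩
            rw [wt_inl pl jl hm x y hrow, if_neg (by norm_num), h]
          · refine ⟨Sum.inr ⟨0, by omega⟩, ?_⟩
            rw [wt_inr pl jl hm hn Cw hcol, h]
      rw [himg]
      rw [Finset.card_insert_of_notMem (by simp [hxy, hxC]),
        Finset.card_insert_of_notMem (by simp [hyC]), Finset.card_singleton]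
  -- lower bound
  have hlb : ∀ k ∈ { k | ∃ f, IsLocalAntimagic G f ∧ colorCount G f = k }, 3 ≤ k := by
    rintro k ⟨f, hf, rfl⟩
    have a0 : Fin (2*m) := ⟨0, by omega⟩
    have hadj01 : G.Adj (Sum.inl (⟨0, by omega⟩ : Fin (2*m))) (Sum.inl ⟨1, by omega⟩) := by
      rw [hG, joinG_adj_inl_inl, pathGraph_adj]; left; rfl
    have hadj0r : G.Adj (Sum.inl (⟨0, by omega⟩ : Fin (2*m))) (Sum.inr ⟨0, by omega⟩) := by
      rw [hG]; exact joinG_adj_inl_inr _ _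
    have hadj1r : G.Adj (Sum.inl (⟨1, by omega⟩ : Fin (2*m))) (Sum.inr ⟨0, by omega⟩) := by
      rw [hG]; exact joinG_adj_inl_inr _ _
    have h01 := hf.2 hadj01
    have h0r := hf.2 hadj0r
    have h1r := hf.2 hadj1r
    have hsub : ({vertexWeight G f (Sum.inl ⟨0, by omega⟩),
        vertexWeight G f (Sum.inl ⟨1, by omega⟩),
        vertexWeight G f (Sum.inr ⟨0, by omega⟩)} : Finset ℕ)
        ⊆ Finset.univ.image (vertexWeight G f) := by
      intro w hw
      simp only [Finset.mem_insert, Finset.mem_singleton] at hw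
      rcases hw with rfl | rfl | rfl <;> exact Finset.mem_image_of_mem _ (Finset.mem_univ _)
    have hcard : ({vertexWeight G f (Sum.inl ⟨0, by omega⟩),
        vertexWeight G f (Sum.inl ⟨1, by omega⟩),
        vertexWeight G f (Sum.inr ⟨0, by omega⟩)} : Finset ℕ).card = 3 := by
      rw [Finset.card_insert_of_notMem (by simp [h01, h0r]),
        Finset.card_insert_of_notMem (by simp [h1r]), Finset.card_singleton]
    calc 3 = _ := hcard.symm
    _ ≤ _ := Finset.card_le_card hsub
  exact le_antisymm (Nat.sInf_le hmem) (hlb _ (Nat.sInf_mem ⟨3, hmem⟩))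

end master

/-- Theorem: For all integers `m, n ≥ 1`, `χ_la(P_{2m} ∨ O_{2n}) = 3`. -/
theorem chiLA_path_join_null_even (m n : ℕ) (hm : 1 ≤ m) (hn : 1 ≤ n) :
    chiLA (joinG (pathGraph (2 * m)) (⊥ : SimpleGraph (Fin (2 * n)))) = 3 := by
  by_cases h11 : m = 1 ∧ n = 1
  · obtain ⟨rfl, rfl⟩ := h11
    refine master (m := 1) (n := 1) (fun _ => 1) (fun i j => if i = 0 then j + 2 else 5 - j)
      (le_refl 1) (le_refl 1) 6 10 7 ?_ ?_ ?_ ?_ ?_ ?_ ?_ ?_ ?_ ?_ ?_ ?_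
    · intro k hk; norm_num
    · intro k hk; norm_num
    · intro i hi j hj; split_ifs <;> omega
    · intro i hi j hj; split_ifs <;> omega
    · intro k hk k' hk' _; omega
    · intro i hi j hj i' hi' j' hj' h; split_ifs at h <;> omega
    · intro v h1 h2
      norm_num at h2
      interval_cases v
      · exact Or.inl ⟨0, by norm_num⟩
      · exact Or.inr ⟨0, 0, by norm_num⟩
      · exact Or.inr ⟨0, 1, by norm_num⟩
      · exact Or.inr ⟨1, 1, by norm_num⟩
      · exact Or.inr ⟨1, 0, by norm_num⟩
    · intro i hi
      interval_cases i <;>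
        simp [Finset.sum_range_succ, show (2*1 : ℕ) = 2 by norm_num]
    · intro j hj
      interval_cases j <;>
        simp [Finset.sum_range_succ, show (2*1 : ℕ) = 2 by norm_num]
    · norm_num
    · norm_num
    · norm_num
  · exact master (m := m) (n := n) (plf m) (jlf m n) hm hn
      (2*m*n*n + 8*m*n - (n + 2)) (6*m*n*n + 4*m - n) (4*m*m*n + 4*m*m - m)
      (plf_lo m hm) (plf_hi m hm) (jlf_lo m n) (jlf_hi m n hm hn)
      (plf_inj m) (jlf_inj m n hm hn) (jlf_surj m n hm hn)
      (hrow_calc m n hm hn) (hcol_calc m n hm hn)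
      (xy_ne m n hm hn) (xC_ne m n hm hn h11) (yC_ne m n hm hn)
end

section
/- Let G be a graph of size q and suppose f is a local antimagic labeling of G whose induced vertex labeling f⁺ takes exactly two distinct values x and y with x < y. Let X be the number of vertices u with f⁺(u) = x and Y the number of vertices u with f⁺(u) = y. Then G is a bipartite graph whose two parts have sizes X and Y, X > Y, and xX = yY = q(q+1)/2. -/
open Finset SimpleGraph
open scoped Classical

/-- Theorem: Let `G` be a graph of size `q` and `f` a local antimagic labeling of `G` whose
induced vertex labeling takes exactly two distinct values `x < y`. With `X` the number of
vertices of weight `x` and `Y` the number of vertices of weight `y`, `G` is bipartite with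
parts of sizes `X` and `Y`, `X > Y`, and `xX = yY = q(q+1)/2`. -/
theorem localAntimagic_two_colors {V : Type*} [Fintype V] (G : SimpleGraph V)
    (q x y X Y : ℕ) (hq : G.edgeSet.ncard = q)
    (f : Sym2 V → ℕ) (hf : IsLocalAntimagic G f)
    (himg : Finset.univ.image (vertexWeight G f) = {x, y}) (hxy : x < y)
    (hX : X = (Finset.univ.filter (fun u => vertexWeight G f u = x)).card)
    (hY : Y = (Finset.univ.filter (fun u => vertexWeight G f u = y)).card) :
    (∃ A B : Finset V, A ∪ B = Finset.univ ∧ Disjoint A B ∧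
      (∀ u ∈ A, ∀ v ∈ A, ¬ G.Adj u v) ∧ (∀ u ∈ B, ∀ v ∈ B, ¬ G.Adj u v) ∧
      A.card = X ∧ B.card = Y) ∧
    X > Y ∧ x * X = q * (q + 1) / 2 ∧ y * Y = q * (q + 1) / 2 := by
  classical
  obtain ⟨hbij, hadj⟩ := hf
  rw [hq] at hbij
  have hxne : x ≠ y := hxy.ne
  set A : Finset V := Finset.univ.filter (fun u => vertexWeight G f u = x) with hA
  set B : Finset V := Finset.univ.filter (fun u => vertexWeight G f u = y) with hB
  have hall : ∀ u : V, vertexWeight G f u = x ∨ vertexWeight G f u = y := by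
    intro u
    have : vertexWeight G f u ∈ Finset.univ.image (vertexWeight G f) :=
      Finset.mem_image_of_mem _ (Finset.mem_univ u)
    rw [himg] at this
    simpa using this
  -- the total edge-label sum
  have hqcard : G.edgeFinset.card = q := by
    rw [← hq, SimpleGraph.edgeFinset, Set.ncard_eq_toFinset_card']
  have hsum : ∑ e ∈ G.edgeFinset, f e = ∑ i ∈ Finset.Icc 1 q, i := by
    apply Finset.sum_bij (fun e _ => f e)
    · intro e he
      have := hbij.1 (SimpleGraph.mem_edgeFinset.mp he)
      simpa [Finset.mem_Icc, Set.mem_Icc] using this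
    · intro e₁ h₁ e₂ h₂ h
      exact hbij.2.1 (SimpleGraph.mem_edgeFinset.mp h₁) (SimpleGraph.mem_edgeFinset.mp h₂) h
    · intro i hi
      obtain ⟨e, he, hfe⟩ := hbij.2.2 (by simpa [Set.mem_Icc] using Finset.mem_Icc.mp hi)
      exact ⟨e, SimpleGraph.mem_edgeFinset.mpr he, hfe⟩
    · intro e he; rfl
  have hgauss : ∀ n : ℕ, (∑ i ∈ Finset.Icc 1 n, i) * 2 = n * (n + 1) := by
    intro n
    induction n with
    | zero => simp
    | succ k ih => rw [Finset.sum_Icc_succ_top (by omega)]; nlinarith [ih]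
  have hT2 : (∑ e ∈ G.edgeFinset, f e) * 2 = q * (q + 1) := by
    rw [hsum]; exact hgauss q
  -- each edge has exactly one endpoint of each weight
  have honeA : ∀ e ∈ G.edgeFinset, (A.filter (fun u => u ∈ e)).card = 1 := by
    intro e he
    induction e using Sym2.ind with
    | _ a b =>
      have hab : G.Adj a b := by simpa using he
      have hne := hadj hab
      rcases hall a with ha | ha <;> rcases hall b with hb | hb
      · exact absurd (ha.trans hb.symm) hne
      · rw [Finset.card_eq_one]
        refine ⟨a, ?_⟩
        ext w
        simp only [hA, Finset.mem_filter, Finset.mem_univ, true_and, Finset.mem_singleton,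
          Sym2.mem_iff]
        constructor
        · rintro ⟨hw, (rfl | rfl)⟩
          · rfl
          · exact absurd (hw.symm.trans hb) hxne
        · rintro rfl; exact ⟨ha, Or.inl rfl⟩
      · rw [Finset.card_eq_one]
        refine ⟨b, ?_⟩
        ext w
        simp only [hA, Finset.mem_filter, Finset.mem_univ, true_and, Finset.mem_singleton,
          Sym2.mem_iff]
        constructor
        · rintro ⟨hw, (rfl | rfl)⟩
          · exact absurd (hw.symm.trans ha) hxne
          · rfl
        · rintro rfl; exact ⟨hb, Or.inr rfl⟩
      · exact absurd (ha.trans hb.symm) hne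
  have honeB : ∀ e ∈ G.edgeFinset, (B.filter (fun u => u ∈ e)).card = 1 := by
    intro e he
    induction e using Sym2.ind with
    | _ a b =>
      have hab : G.Adj a b := by simpa using he
      have hne := hadj hab
      rcases hall a with ha | ha <;> rcases hall b with hb | hb
      · exact absurd (ha.trans hb.symm) hne
      · rw [Finset.card_eq_one]
        refine ⟨b, ?_⟩
        ext w
        simp only [hB, Finset.mem_filter, Finset.mem_univ, true_and, Finset.mem_singleton,
          Sym2.mem_iff]
        constructor
        · rintro ⟨hw, (rfl | rfl)⟩
          · exact absurd (ha.symm.trans hw) hxne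
          · rfl
        · rintro rfl; exact ⟨hb, Or.inr rfl⟩
      · rw [Finset.card_eq_one]
        refine ⟨a, ?_⟩
        ext w
        simp only [hB, Finset.mem_filter, Finset.mem_univ, true_and, Finset.mem_singleton,
          Sym2.mem_iff]
        constructor
        · rintro ⟨hw, (rfl | rfl)⟩
          · rfl
          · exact absurd (hb.symm.trans hw) hxne
        · rintro rfl; exact ⟨ha, Or.inl rfl⟩
      · exact absurd (ha.trans hb.symm) hne
  have hSA : ∑ u ∈ A, vertexWeight G f u = ∑ e ∈ G.edgeFinset, f e := by
    calc ∑ u ∈ A, vertexWeight G f u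
        = ∑ u ∈ A, ∑ e ∈ G.edgeFinset, if u ∈ e then f e else 0 := by
          simp [vertexWeight, Finset.sum_filter]
      _ = ∑ e ∈ G.edgeFinset, ∑ u ∈ A, if u ∈ e then f e else 0 := Finset.sum_comm
      _ = ∑ e ∈ G.edgeFinset, f e := by
          apply Finset.sum_congr rfl
          intro e he
          rw [← Finset.sum_filter, Finset.sum_const, honeA e he, one_smul]
  have hSB : ∑ u ∈ B, vertexWeight G f u = ∑ e ∈ G.edgeFinset, f e := by
    calc ∑ u ∈ B, vertexWeight G f u
        = ∑ u ∈ B, ∑ e ∈ G.edgeFinset, if u ∈ e then f e else 0 := by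
          simp [vertexWeight, Finset.sum_filter]
      _ = ∑ e ∈ G.edgeFinset, ∑ u ∈ B, if u ∈ e then f e else 0 := Finset.sum_comm
      _ = ∑ e ∈ G.edgeFinset, f e := by
          apply Finset.sum_congr rfl
          intro e he
          rw [← Finset.sum_filter, Finset.sum_const, honeB e he, one_smul]
  have hxX : x * X * 2 = q * (q + 1) := by
    have h1 : ∑ u ∈ A, vertexWeight G f u = X * x := by
      rw [Finset.sum_congr rfl (fun u hu => (Finset.mem_filter.mp hu).2),
        Finset.sum_const, smul_eq_mul, hX]
    have h2 : X * x = ∑ e ∈ G.edgeFinset, f e := h1.symm.trans hSA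
    calc x * X * 2 = (X * x) * 2 := by ring
      _ = q * (q + 1) := by rw [h2, hT2]
  have hyY : y * Y * 2 = q * (q + 1) := by
    have h1 : ∑ u ∈ B, vertexWeight G f u = Y * y := by
      rw [Finset.sum_congr rfl (fun u hu => (Finset.mem_filter.mp hu).2),
        Finset.sum_const, smul_eq_mul, hY]
    have h2 : Y * y = ∑ e ∈ G.edgeFinset, f e := h1.symm.trans hSB
    calc y * Y * 2 = (Y * y) * 2 := by ring
      _ = q * (q + 1) := by rw [h2, hT2]
  -- Y ≥ 1
  have hY0 : 0 < Y := by
    have hy : y ∈ Finset.univ.image (vertexWeight G f) := by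
      rw [himg]; simp
    obtain ⟨u, -, hu⟩ := Finset.mem_image.mp hy
    have : u ∈ B := by rw [hB]; simp [hu]
    rw [hY]
    exact Finset.card_pos.mpr ⟨u, this⟩
  have hXY : X > Y := by
    by_contra h
    push_neg at h
    have heq : x * X = y * Y := by omega
    nlinarith
  refine ⟨⟨A, B, ?_, ?_, ?_, ?_, hX.symm, hY.symm⟩, hXY, by omega, by omega⟩
  · ext u
    simp only [Finset.mem_union, hA, hB, Finset.mem_filter, Finset.mem_univ, true_and,
      iff_true]
    exact hall u
  · rw [Finset.disjoint_left]
    intro u hu hv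
    rw [hA, Finset.mem_filter] at hu
    rw [hB, Finset.mem_filter] at hv
    exact hxne (hu.2 ▸ hv.2)
  · intro u hu v hv hadj'
    rw [hA, Finset.mem_filter] at hu hv
    exact hadj hadj' (hu.2.trans hv.2.symm)
  · intro u hu v hv hadj'
    rw [hB, Finset.mem_filter] at hu hv
    exact hadj hadj' (hu.2.trans hv.2.symm)
end

section
/- Let G be a d-regular graph of size q. If f is a local antimagic labeling of G, then the labeling g defined by g(e) = q + 1 − f(e) for every edge e is also a local antimagic labeling of G with c(g) = c(f). Moreover, if c(f) = χ_la(G) and e is an edge with f(e) = 1 or f(e) = q, then χ_la(G − e) ≤ χ_la(G). -/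
open Finset SimpleGraph
open scoped Classical

private lemma card_inc {V : Type*} [Fintype V] (G : SimpleGraph V) (x : V) :
    (G.edgeFinset.filter (fun e => x ∈ e)).card = G.degree x := by
  classical
  rw [← SimpleGraph.incidenceFinset_eq_filter, SimpleGraph.card_incidenceFinset_eq_degree]

private lemma sum_pred_add {α : Type*} (s : Finset α) (F : α → ℕ)
    (h : ∀ e ∈ s, 1 ≤ F e) :
    ∑ e ∈ s, (F e - 1) + s.card = ∑ e ∈ s, F e := by
  have hc : s.card = ∑ _e ∈ s, 1 := by simp
  rw [hc, ← Finset.sum_add_distrib]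
  exact Finset.sum_congr rfl (fun e he => Nat.sub_add_cancel (h e he))

/-- Theorem: Let `G` be a `d`-regular graph of size `q`. If `f` is a local antimagic labeling
of `G`, then `g = q + 1 − f` is also a local antimagic labeling of `G` with `c(g) = c(f)`.
Moreover, if `c(f) = χ_la(G)` and `e` is an edge with `f(e) = 1` or `f(e) = q`, then
`χ_la(G − e) ≤ χ_la(G)`. -/
theorem localAntimagic_complement_regular {V : Type*} [Fintype V] (G : SimpleGraph V)
    (d q : ℕ) (hreg : G.IsRegularOfDegree d) (hq : G.edgeSet.ncard = q)
    (f : Sym2 V → ℕ) (hf : IsLocalAntimagic G f) :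
    (IsLocalAntimagic G (fun e => q + 1 - f e) ∧
      colorCount G (fun e => q + 1 - f e) = colorCount G f) ∧
    (colorCount G f = chiLA G →
      ∀ e ∈ G.edgeSet, (f e = 1 ∨ f e = q) →
        chiLA (G.deleteEdges {e}) ≤ chiLA G) := by

  classical
  obtain ⟨hbij, hadj⟩ := hf
  have hmem : ∀ e ∈ G.edgeSet, 1 ≤ f e ∧ f e ≤ q := by
    intro e he
    have h := hbij.mapsTo he
    rw [hq] at h
    exact ⟨h.1, h.2⟩
  have hmemA : ∀ x, ∀ e ∈ G.edgeFinset.filter (fun e => x ∈ e),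
      1 ≤ f e ∧ f e ≤ q := by
    intro x e he
    exact hmem e (SimpleGraph.mem_edgeFinset.mp (Finset.mem_filter.mp he).1)
  have hkey : ∀ x, vertexWeight G (fun e => q + 1 - f e) x + vertexWeight G f x
      = d * (q + 1) := by
    intro x
    unfold vertexWeight
    rw [← Finset.sum_add_distrib]
    rw [Finset.sum_congr rfl (fun e he => Nat.sub_add_cancel
      (by have := (hmemA x e he).2; omega))]
    rw [Finset.sum_const, card_inc, hreg x, smul_eq_mul]
  have part1 : IsLocalAntimagic G (fun e => q + 1 - f e) ∧
      colorCount G (fun e => q + 1 - f e) = colorCount G f := by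
    constructor
    · constructor
      · constructor
        · intro a ha
          have h := hmem a ha
          rw [hq]
          simp only [Set.mem_Icc]
          omega
        · constructor
          · intro a ha b hb hab
            have h1 := hmem a ha
            have h2 := hmem b hb
            simp only at hab
            exact hbij.injOn ha hb (by omega)
          · intro m hm
            rw [hq] at hm
            obtain ⟨hm1, hm2⟩ := hm
            obtain ⟨a, ha, hfa⟩ := hbij.surjOn
              (show q + 1 - m ∈ Set.Icc 1 G.edgeSet.ncard by
                rw [hq]; exact ⟨by omega, by omega⟩)
            exact ⟨a, ha, by simp only; omega⟩
      · intro x y hxy hw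
        have h1 := hkey x
        have h2 := hkey y
        exact hadj hxy (by omega)
    · unfold colorCount
      have himg : (Finset.univ.image (vertexWeight G (fun e => q + 1 - f e))) =
          (Finset.univ.image (vertexWeight G f)).image (fun a => d * (q + 1) - a) := by
        ext s
        simp only [Finset.mem_image, Finset.mem_univ, true_and]
        constructor
        · rintro ⟨x, rfl⟩
          exact ⟨vertexWeight G f x, ⟨x, rfl⟩, by have := hkey x; omega⟩
        · rintro ⟨a, ⟨x, rfl⟩, rfl⟩
          exact ⟨x, by have := hkey x; omega⟩
      rw [himg]
      apply Finset.card_image_of_injOn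
      intro a ha b hb hab
      simp only [Finset.coe_image, Finset.coe_univ, Set.image_univ, Set.mem_range] at ha hb
      obtain ⟨x, rfl⟩ := ha
      obtain ⟨y, rfl⟩ := hb
      have h1 := hkey x
      have h2 := hkey y
      beta_reduce at hab
      omega
  refine ⟨part1, ?_⟩
  intro hopt e he hfe
  obtain ⟨F, hFbij, hFadj, hFc, hFe⟩ : ∃ F : Sym2 V → ℕ,
      Set.BijOn F G.edgeSet (Set.Icc 1 G.edgeSet.ncard) ∧
      (∀ ⦃x y : V⦄, G.Adj x y → vertexWeight G F x ≠ vertexWeight G F y) ∧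
      colorCount G F = chiLA G ∧ F e = 1 := by
    rcases hfe with h1 | h1
    · exact ⟨f, hbij, hadj, hopt, h1⟩
    · refine ⟨_, part1.1.1, part1.1.2, part1.2.trans hopt, ?_⟩
      have := hmem e he
      show q + 1 - f e = 1
      omega
  have hFmem : ∀ e' ∈ G.edgeSet, 1 ≤ F e' ∧ F e' ≤ q := by
    intro e' he'
    have h := hFbij.mapsTo he'
    rw [hq] at h
    exact ⟨h.1, h.2⟩
  set G' := G.deleteEdges {e} with hG'
  have hG'edge : G'.edgeSet = G.edgeSet \ {e} := SimpleGraph.edgeSet_deleteEdges _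
  have hq' : G'.edgeSet.ncard = q - 1 := by
    rw [hG'edge, Set.ncard_diff_singleton_of_mem he, hq]
  have hA' : ∀ x : V, G'.edgeFinset.filter (fun e' => x ∈ e') =
      (G.edgeFinset.filter (fun e' => x ∈ e')).erase e := by
    intro x
    ext a
    simp only [Finset.mem_filter, Finset.mem_erase, SimpleGraph.mem_edgeFinset, hG'edge,
      Set.mem_diff, Set.mem_singleton_iff]
    tauto
  have hW : ∀ x, vertexWeight G' (fun e' => F e' - 1) x + d = vertexWeight G F x := by
    intro x
    unfold vertexWeight
    rw [Finset.sum_congr (s₂ := (G.edgeFinset.filter (fun e' => x ∈ e')).erase e) ?hs (fun _ _ => rfl)]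
    case hs => convert hA' x
    set A := G.edgeFinset.filter (fun e' => x ∈ e') with hAdef
    beta_reduce
    have hcardA : A.card = d := by rw [hAdef, card_inc, hreg x]
    have hsp := sum_pred_add (A.erase e) F (fun e' he' =>
      (hFmem e' (SimpleGraph.mem_edgeFinset.mp
        (Finset.mem_filter.mp (Finset.mem_erase.mp he').2).1)).1)
    by_cases hx : e ∈ A
    · have h1 : ∑ e' ∈ A.erase e, F e' + F e = ∑ e' ∈ A, F e' :=
        Finset.sum_erase_add A F hx
      have h2 : (A.erase e).card = A.card - 1 := Finset.card_erase_of_mem hx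
      have hd : 1 ≤ A.card := Finset.card_pos.mpr ⟨e, hx⟩
      omega
    · rw [Finset.erase_eq_of_notMem hx] at hsp ⊢
      omega
  have hWge : ∀ x, d ≤ vertexWeight G F x := by
    intro x
    unfold vertexWeight
    calc d = (G.edgeFinset.filter (fun e' => x ∈ e')).card := by rw [card_inc, hreg x]
    _ = ∑ _e' ∈ G.edgeFinset.filter (fun e' => x ∈ e'), 1 := by
        rw [Finset.sum_const, smul_eq_mul, mul_one]
    _ ≤ _ := Finset.sum_le_sum (fun e' he' =>
        (hFmem e' (SimpleGraph.mem_edgeFinset.mp (Finset.mem_filter.mp he').1)).1)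
  have hanti : IsLocalAntimagic G' (fun e' => F e' - 1) := by
    constructor
    · rw [hq']
      constructor
      · intro a ha
        rw [hG'edge] at ha
        have h1 := hFmem a ha.1
        have hne : F a ≠ 1 := by
          intro hcon
          exact (ha.2 : a ≠ e) (hFbij.injOn ha.1 he (hcon.trans hFe.symm))
        simp only [Set.mem_Icc]
        omega
      · constructor
        · intro a ha b hb hab
          rw [hG'edge] at ha hb
          have h1 := hFmem a ha.1
          have h2 := hFmem b hb.1
          simp only at hab
          exact hFbij.injOn ha.1 hb.1 (by omega)
        · intro m hm
          obtain ⟨hm1, hm2⟩ := hm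
          obtain ⟨a, ha, hfa⟩ := hFbij.surjOn
            (show m + 1 ∈ Set.Icc 1 G.edgeSet.ncard by
              rw [hq]; exact ⟨by omega, by omega⟩)
          have hane : a ≠ e := by
            intro hcon
            rw [hcon, hFe] at hfa
            omega
          refine ⟨a, ?_, by simp only; omega⟩
          rw [hG'edge]
          exact ⟨ha, hane⟩
    · intro x y hxy hw
      have hGadj : G.Adj x y := (SimpleGraph.deleteEdges_adj.mp hxy).1
      have h1 := hW x
      have h2 := hW y
      exact hFadj hGadj (by omega)
  have hcc : colorCount G' (fun e' => F e' - 1) = colorCount G F := by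
    unfold colorCount
    have himg : (Finset.univ.image (vertexWeight G' (fun e' => F e' - 1))) =
        (Finset.univ.image (vertexWeight G F)).image (fun a => a - d) := by
      ext s
      simp only [Finset.mem_image, Finset.mem_univ, true_and]
      constructor
      · rintro ⟨x, rfl⟩
        exact ⟨vertexWeight G F x, ⟨x, rfl⟩, by have := hW x; omega⟩
      · rintro ⟨a, ⟨x, rfl⟩, rfl⟩
        exact ⟨x, by have := hW x; omega⟩
    rw [himg]
    apply Finset.card_image_of_injOn
    intro a ha b hb hab
    simp only [Finset.coe_image, Finset.coe_univ, Set.image_univ, Set.mem_range] at ha hb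
    obtain ⟨x, rfl⟩ := ha
    obtain ⟨y, rfl⟩ := hb
    have h1 := hWge x
    have h2 := hWge y
    beta_reduce at hab
    omega
  calc chiLA G' ≤ colorCount G' (fun e' => F e' - 1) :=
        Nat.sInf_le ⟨fun e' => F e' - 1, hanti, rfl⟩
  _ = chiLA G := hcc.trans hFc
end

section
/- Let G be a graph of size q and f a local antimagic labeling of G such that for all vertices x, y of G: (i) if f⁺(x) = f⁺(y) then deg(x) = deg(y), and (ii) if f⁺(x) ≠ f⁺(y) then (q+1)(deg(x) − deg(y)) ≠ f⁺(x) − f⁺(y). Then the labeling g defined by g(e) = q + 1 − f(e) for every edge e is also a local antimagic labeling of G with c(g) = c(f). -/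
open Finset SimpleGraph
open scoped Classical

/-- Theorem: Let `G` be a graph of size `q` and `f` a local antimagic labeling of `G` such that
for all vertices `x, y`: (i) `f⁺(x) = f⁺(y)` implies `deg(x) = deg(y)`, and (ii)
`f⁺(x) ≠ f⁺(y)` implies `(q+1)(deg(x) − deg(y)) ≠ f⁺(x) − f⁺(y)`. Then `g = q + 1 − f` is
also a local antimagic labeling of `G` with `c(g) = c(f)`. -/
theorem localAntimagic_complement {V : Type*} [Fintype V] (G : SimpleGraph V)
    (q : ℕ) (hq : G.edgeSet.ncard = q)
    (f : Sym2 V → ℕ) (hf : IsLocalAntimagic G f)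
    (h1 : ∀ x y : V, vertexWeight G f x = vertexWeight G f y → G.degree x = G.degree y)
    (h2 : ∀ x y : V, vertexWeight G f x ≠ vertexWeight G f y →
      ((q : ℤ) + 1) * ((G.degree x : ℤ) - (G.degree y : ℤ)) ≠
        (vertexWeight G f x : ℤ) - (vertexWeight G f y : ℤ)) :
    IsLocalAntimagic G (fun e => q + 1 - f e) ∧
      colorCount G (fun e => q + 1 - f e) = colorCount G f := by
    classical
  set g : Sym2 V → ℕ := fun e => q + 1 - f e with hg
  have hbnd : ∀ e ∈ G.edgeSet, 1 ≤ f e ∧ f e ≤ q := by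
    intro e he
    have := hf.1.1 he
    rw [hq] at this
    exact Set.mem_Icc.mp this
  have hcard : ∀ x : V, (G.edgeFinset.filter (fun e => x ∈ e)).card = G.degree x := by
    intro x
    rw [← SimpleGraph.incidenceFinset_eq_filter, SimpleGraph.card_incidenceFinset_eq_degree]
  have hB : ∀ x : V, vertexWeight G g x + vertexWeight G f x = (q + 1) * G.degree x := by
    intro x
    unfold vertexWeight
    rw [← Finset.sum_add_distrib]
    have : ∀ e ∈ G.edgeFinset.filter (fun e => x ∈ e), g e + f e = q + 1 := by
      intro e he
      have he' : e ∈ G.edgeSet := by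
        rw [← SimpleGraph.mem_edgeFinset]; exact (Finset.mem_filter.mp he).1
      have := hbnd e he'
      simp only [hg]
      omega
    rw [Finset.sum_congr rfl this, Finset.sum_const, hcard x, smul_eq_mul, mul_comm]
  have key : ∀ x y : V, vertexWeight G f x = vertexWeight G f y ↔
      vertexWeight G g x = vertexWeight G g y := by
    intro x y
    constructor
    · intro h
      have hd := h1 x y h
      have hx := hB x; have hy := hB y
      rw [hd] at hx
      omega
    · intro h
      by_contra hne
      apply h2 x y hne
      have hx := hB x
      have hy := hB y
      have hx' : (vertexWeight G g x : ℤ) + (vertexWeight G f x : ℤ)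
          = ((q : ℤ) + 1) * (G.degree x : ℤ) := by exact_mod_cast congrArg (Nat.cast : ℕ → ℤ) hx
      have hy' : (vertexWeight G g y : ℤ) + (vertexWeight G f y : ℤ)
          = ((q : ℤ) + 1) * (G.degree y : ℤ) := by exact_mod_cast congrArg (Nat.cast : ℕ → ℤ) hy
      have hgg : (vertexWeight G g x : ℤ) = (vertexWeight G g y : ℤ) := by exact_mod_cast h
      ring_nf
      ring_nf at hx' hy'
      linarith
  refine ⟨⟨?_, ?_⟩, ?_⟩
  · rw [hq]
    refine ⟨?_, ?_, ?_⟩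
    · intro e he
      have := hbnd e he
      simp only [hg, Set.mem_Icc]
      omega
    · intro e1 h1' e2 h2' hEq
      have b1 := hbnd e1 h1'
      have b2 := hbnd e2 h2'
      apply hf.1.2.1 h1' h2'
      simp only [hg] at hEq
      omega
    · intro n hn
      have hn' : n ∈ Set.Icc 1 q := hn
      rw [Set.mem_Icc] at hn'
      have : q + 1 - n ∈ Set.Icc 1 G.edgeSet.ncard := by
        rw [hq, Set.mem_Icc]; omega
      obtain ⟨e, he, hfe⟩ := hf.1.2.2 this
      exact ⟨e, he, by simp only [hg]; omega⟩
  · intro x y hxy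
    intro h
    exact hf.2 hxy ((key x y).mpr h)
  · unfold colorCount
    apply Finset.card_bij (fun a ha => vertexWeight G f (Finset.mem_image.mp ha).choose)
    · intro a ha
      exact Finset.mem_image_of_mem _ (Finset.mem_univ _)
    · intro a ha b hb hEq
      obtain ⟨_, hxa⟩ := (Finset.mem_image.mp ha).choose_spec
      obtain ⟨_, hxb⟩ := (Finset.mem_image.mp hb).choose_spec
      rw [← hxa, ← hxb]
      exact (key _ _).mp hEq
    · intro b hb
      obtain ⟨x, _, hx⟩ := Finset.mem_image.mp hb
      have ha : vertexWeight G g x ∈ Finset.univ.image (vertexWeight G g) :=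
        Finset.mem_image_of_mem _ (Finset.mem_univ _)
      refine ⟨vertexWeight G g x, ha, ?_⟩
      obtain ⟨_, hxa⟩ := (Finset.mem_image.mp ha).choose_spec
      rw [← hx]
      exact (key _ _).mpr hxa
end
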